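/- Let g3(n)=α1 n+α0, g2(n)=β1 n+β0, g1(n)=γ1 n+γ0 be real polynomials of degree at most 1 with g3(n) > 0, g2(n) > 0 and g1(n) < 0 for all integers n ≥ 0 (signature (+,−)), and suppose g2(n)² + 4 g3(n) g1(n) < 0 for every integer n ≥ 0. Then the recurrence g3(n)u_n = g2(n)u_{n-1} + g1(n)u_{n-2} (n ≥ 1) has no nontrivial solution (u_n)_{n≥-1} with u_n ≥ 0 for all n ≥ −1. -/

import Mathlib

private lemma lin_nonneg_aux {a b : ℝ} (h : ∀ n : ℤ, 0 ≤ n → 0 < a * n + b) : 0 ≤ a := by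
  by_contra hneg
  push_neg at hneg
  have ha : 0 < -a := by linarith
  set n : ℤ := max 0 ⌈(|b| + 1) / (-a)⌉ with hn
  have hn0 : (0:ℤ) ≤ n := le_max_left _ _
  have h2 : (|b| + 1) / (-a) ≤ (n:ℝ) := by
    refine (Int.le_ceil _).trans ?_
    exact_mod_cast le_max_right 0 ⌈(|b| + 1) / (-a)⌉
  rw [div_le_iff₀ ha] at h2
  have h3 := h n hn0
  have h4 := le_abs_self b
  nlinarith

private lemma quad_nonneg_aux {a b c : ℝ} (h : ∀ n : ℤ, 0 ≤ n → 0 < a * n^2 + b * n + c) :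
    0 ≤ a := by
  by_contra hneg
  push_neg at hneg
  have ha : 0 < -a := by linarith
  set n : ℤ := max 1 ⌈(|b| + |c| + 1) / (-a)⌉ with hn
  have hn1 : (1:ℤ) ≤ n := le_max_left _ _
  have hn1' : (1:ℝ) ≤ (n:ℝ) := by exact_mod_cast hn1
  have hn0' : (0:ℝ) ≤ (n:ℝ) := by linarith
  have h2 : (|b| + |c| + 1) / (-a) ≤ (n:ℝ) := by
    refine (Int.le_ceil _).trans ?_
    exact_mod_cast le_max_right 1 ⌈(|b| + |c| + 1) / (-a)⌉
  rw [div_le_iff₀ ha] at h2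
  have h3 := h n (by linarith)
  nlinarith [mul_le_mul_of_nonneg_left h2 hn0',
    mul_le_mul_of_nonneg_right (le_abs_self b) hn0',
    mul_nonneg (abs_nonneg c) (by linarith : (0:ℝ) ≤ (n:ℝ) - 1),
    le_abs_self c]

set_option maxHeartbeats 2000000 in
/-- A degree-at-most-1 recurrence `g3(n) u n = g2(n) u (n-1) + g1(n) u (n-2)`
with signature `(+,−)` (`g3 > 0`, `g2 > 0`, `g1 < 0` on `n ≥ 0`) and everywhere negative
discriminant `g2(n)² + 4 g3(n) g1(n) < 0` has no nontrivial nonnegative solution. -/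
theorem stmt_4 (α1 α0 β1 β0 γ1 γ0 : ℝ) (u : ℤ → ℝ)
    (hsig : ∀ n : ℤ, 0 ≤ n →
      0 < α1 * (n : ℝ) + α0 ∧ 0 < β1 * (n : ℝ) + β0 ∧ γ1 * (n : ℝ) + γ0 < 0)
    (hdisc : ∀ n : ℤ, 0 ≤ n →
      (β1 * (n : ℝ) + β0) ^ 2 + 4 * (α1 * (n : ℝ) + α0) * (γ1 * (n : ℝ) + γ0) < 0)
    (hu : ∀ n : ℤ, 1 ≤ n →
      (α1 * (n : ℝ) + α0) * u n =
        (β1 * (n : ℝ) + β0) * u (n - 1) + (γ1 * (n : ℝ) + γ0) * u (n - 2))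
    (hnt : ∃ n : ℤ, -1 ≤ n ∧ u n ≠ 0) :
    ¬ (∀ n : ℤ, -1 ≤ n → 0 ≤ u n) := by
  intro hpos
  obtain ⟨m, hm1, hmne⟩ := hnt
  have hm0 : 0 < u m := lt_of_le_of_ne (hpos m hm1) (Ne.symm hmne)
  -- abbreviations
  obtain ⟨P, hPdef⟩ : ∃ P : ℤ → ℝ, ∀ n : ℤ,
      P n = -((β1*(n:ℝ)+β0)^2 + 4*(α1*(n:ℝ)+α0)*(γ1*(n:ℝ)+γ0)) := ⟨_, fun _ => rfl⟩
  obtain ⟨G, hGdef⟩ : ∃ G : ℤ → ℝ, ∀ n : ℤ, G n = α1*(n:ℝ)+α0 := ⟨_, fun _ => rfl⟩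
  obtain ⟨t, htdef⟩ : ∃ t : ℤ → ℝ, ∀ n : ℤ, t n = u n / u (n-1) := ⟨_, fun _ => rfl⟩
  have hPpos : ∀ n : ℤ, 0 ≤ n → 0 < P n := by
    intro n hn
    rw [hPdef]
    have := hdisc n hn
    linarith
  have hGpos : ∀ n : ℤ, 0 ≤ n → 0 < G n := by
    intro n hn; rw [hGdef]; exact (hsig n hn).1
  have hα0 : 0 < α0 := by have := (hsig 0 le_rfl).1; simpa using this
  have hα1 : 0 ≤ α1 := lin_nonneg_aux (fun n hn => (hsig n hn).1)
  -- step 1 : positivity propagates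
  have step : ∀ k : ℤ, -1 ≤ k → 0 < u k → 0 < u (k+1) := by
    intro k hk hk0
    have hrec := hu (k+2) (by linarith)
    rw [show k + 2 - 1 = k + 1 by ring, show k + 2 - 2 = k by ring] at hrec
    have hs := hsig (k+2) (by linarith)
    have hun : 0 ≤ u (k+2) := hpos (k+2) (by linarith)
    by_contra hcon
    push_neg at hcon
    have p1 : 0 ≤ (α1*((k:ℝ)+2)+α0) * u (k+2) := by
      have := hs.1; push_cast at this ⊢; exact mul_nonneg (le_of_lt this) hun
    have p2 : (β1*((k:ℝ)+2)+β0) * u (k+1) ≤ 0 := by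
      have := hs.2.1; push_cast at this ⊢
      exact mul_nonpos_of_nonneg_of_nonpos (le_of_lt this) hcon
    have p3 : (γ1*((k:ℝ)+2)+γ0) * u k < 0 := by
      have := hs.2.2; push_cast at this ⊢
      exact mul_neg_of_neg_of_pos this hk0
    push_cast at hrec
    linarith
  have hupos : ∀ n : ℤ, m ≤ n → 0 < u n := by
    refine Int.le_induction hm0 ?_
    intro n hn ih
    exact step n (by linarith) ih
  have htpos : ∀ n : ℤ, m + 1 ≤ n → 0 < t n := by
    intro n hn
    rw [htdef]
    exact div_pos (hupos n (by linarith)) (hupos (n-1) (by linarith))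
  -- step 2 : ratio drop
  have hdrop : ∀ n : ℤ, m + 2 ≤ n →
      P n / (4 * (G n)^2 * t (n-1)) ≤ t (n-1) - t n := by
    intro n hn
    have hn0 : (0:ℤ) ≤ n := by linarith
    have h2 : 0 < u (n-2) := hupos _ (by linarith)
    have h1 : 0 < u (n-1) := hupos _ (by linarith)
    have h0 : 0 < u n := hupos _ (by linarith)
    have hrec := hu n (by linarith)
    have hGp := hGpos n hn0
    have hPp := hPpos n hn0
    have hsq : 0 ≤ 4 * u (n-1) *
        ((α1*(n:ℝ)+α0) * u (n-1) - (β1*(n:ℝ)+β0)/2 * u (n-2))^2 := by positivity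
    have hiden : (u (n-1)^2 - u n * u (n-2)) * (4*(G n)^2 * u (n-1))
        - P n * (u (n-2) * (u (n-1) * u (n-2)))
        = 4 * u (n-1) * ((α1*(n:ℝ)+α0) * u (n-1) - (β1*(n:ℝ)+β0)/2 * u (n-2))^2 := by
      rw [hPdef, hGdef]
      linear_combination (-(4:ℝ) * u (n-1) * (α1*(n:ℝ)+α0) * u (n-2)) * hrec
    have e1 : t (n-1) - t n = (u (n-1)^2 - u n * u (n-2)) / (u (n-1) * u (n-2)) := by
      rw [htdef, htdef, show n-1-1 = n-2 by ring]
      field_simp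
    have hne1 : u (n-1) ≠ 0 := ne_of_gt h1
    have hne2 : u (n-2) ≠ 0 := ne_of_gt h2
    have hneG : G n ≠ 0 := ne_of_gt hGp
    have e2 : P n / (4*(G n)^2 * t (n-1)) = P n * u (n-2) / (4 * (G n)^2 * u (n-1)) := by
      rw [htdef, show n-1-1 = n-2 by ring]
      field_simp
    rw [e1, e2, div_le_div_iff₀ (by positivity) (by positivity)]
    nlinarith [hsq, hiden]
  have htmono : ∀ n : ℤ, m + 2 ≤ n → t n ≤ t (n-1) := by
    intro n hn
    have hd := hdrop n hn
    have hp : 0 < P n / (4 * (G n)^2 * t (n-1)) := by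
      apply div_pos (hPpos n (by linarith))
      have := htpos (n-1) (by linarith)
      have := hGpos n (by linarith)
      positivity
    linarith
  have htbound : ∀ n : ℤ, m + 1 ≤ n → t n ≤ t (m+1) := by
    refine Int.le_induction le_rfl ?_
    intro n hn ih
    have h := htmono (n+1) (by linarith)
    rw [show n+1-1 = n by ring] at h
    linarith
  -- step 3 : the key polynomial lower bound
  have claim : ∃ (N : ℕ) (c : ℝ), 0 < c ∧
      ∀ n : ℤ, (N:ℤ) ≤ n → c * (G n)^2 ≤ ((n:ℝ)+1) * P n := by
    obtain ⟨c2, c1, c0, hc2def, hc1def, hc0def⟩ :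
        ∃ c2 c1 c0 : ℝ, c2 = -(β1^2 + 4*α1*γ1) ∧
          c1 = -(2*β1*β0 + 4*α1*γ0 + 4*α0*γ1) ∧ c0 = -(β0^2 + 4*α0*γ0) :=
      ⟨_, _, _, rfl, rfl, rfl⟩
    have hPpoly : ∀ n : ℤ, P n = c2*(n:ℝ)^2 + c1*(n:ℝ) + c0 := by
      intro n; rw [hPdef, hc2def, hc1def, hc0def]; ring
    have hPq : ∀ n : ℤ, 0 ≤ n → 0 < c2*(n:ℝ)^2 + c1*(n:ℝ) + c0 := by
      intro n hn; rw [← hPpoly]; exact hPpos n hn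
    have hc2 : 0 ≤ c2 := quad_nonneg_aux hPq
    have hGsq : ∀ n : ℤ, 0 ≤ n → (G n)^2 ≤ (α1+α0)^2 * ((n:ℝ)+1)^2 := by
      intro n hn
      have hn' : (0:ℝ) ≤ (n:ℝ) := by exact_mod_cast hn
      rw [hGdef]
      nlinarith [mul_nonneg (by nlinarith : (0:ℝ) ≤ α0*(n:ℝ)+α1)
        (by nlinarith : (0:ℝ) ≤ (α1+α0)*((n:ℝ)+1)+(α1*(n:ℝ)+α0))]
    have hS : 0 < (α1+α0)^2 := by positivity
    rcases lt_or_eq_of_le hc2 with hc2p | hc2z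
    · -- c2 > 0
      refine ⟨⌈(2*(|c1|+|c0|)+c2)/c2⌉₊ + 1, c2/(2*(α1+α0)^2), by positivity, ?_⟩
      intro n hn
      have hn1 : (1:ℤ) ≤ n := le_trans (by exact_mod_cast Nat.succ_le_succ (Nat.zero_le _)) hn
      have hn1' : (1:ℝ) ≤ (n:ℝ) := by exact_mod_cast hn1
      have hnn : (0:ℤ) ≤ n := by linarith
      have hn' : (2*(|c1|+|c0|)+c2)/c2 ≤ (n:ℝ) := by
        refine (Nat.le_ceil _).trans ?_
        have : ((⌈(2*(|c1|+|c0|)+c2)/c2⌉₊ : ℤ)) ≤ n := by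
          refine le_trans ?_ hn
          exact_mod_cast Nat.le_succ _
        exact_mod_cast this
      rw [div_le_iff₀ hc2p] at hn'
      rw [hPpoly]
      have hG2 := hGsq n hnn
      have key : c2/2 * ((n:ℝ)+1) ≤ c2*(n:ℝ)^2 + c1*(n:ℝ) + c0 := by
        nlinarith [mul_le_mul_of_nonneg_left hn' (by linarith : (0:ℝ) ≤ (n:ℝ)),
          mul_le_mul_of_nonneg_right (neg_abs_le c1) (by linarith : (0:ℝ) ≤ (n:ℝ)),
          mul_nonneg (abs_nonneg c0) (by linarith : (0:ℝ) ≤ (n:ℝ) - 1),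
          mul_nonneg (abs_nonneg c1) (by linarith : (0:ℝ) ≤ (n:ℝ)),
          mul_nonneg hc2 (by linarith : (0:ℝ) ≤ (n:ℝ) - 1),
          neg_abs_le c0, abs_nonneg c0, abs_nonneg c1]
      calc c2/(2*(α1+α0)^2) * (G n)^2
          ≤ c2/(2*(α1+α0)^2) * ((α1+α0)^2*((n:ℝ)+1)^2) := by
            exact mul_le_mul_of_nonneg_left hG2 (by positivity)
        _ = (c2/2*((n:ℝ)+1)) * ((n:ℝ)+1) := by field_simp
        _ ≤ (c2*(n:ℝ)^2 + c1*(n:ℝ) + c0) * ((n:ℝ)+1) := by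
            exact mul_le_mul_of_nonneg_right key (by linarith)
        _ = ((n:ℝ)+1) * (c2*(n:ℝ)^2 + c1*(n:ℝ) + c0) := by ring
    · -- c2 = 0
      have hPlin : ∀ n : ℤ, 0 ≤ n → 0 < c1*(n:ℝ) + c0 := by
        intro n hn
        have h := hPq n hn
        rw [← hc2z] at h
        simpa using h
      have hc1 : 0 ≤ c1 := lin_nonneg_aux hPlin
      have hc0 : 0 < c0 := by have := hPlin 0 le_rfl; simpa using this
      rcases lt_or_eq_of_le hc1 with hc1p | hc1z
      · -- c1 > 0
        refine ⟨⌈(c1-2*c0)/c1⌉₊, c1/(2*(α1+α0)^2), by positivity, ?_⟩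
        intro n hn
        have hnn : (0:ℤ) ≤ n := le_trans (by exact_mod_cast Nat.zero_le _) hn
        have hnn' : (0:ℝ) ≤ (n:ℝ) := by exact_mod_cast hnn
        have hn' : (c1-2*c0)/c1 ≤ (n:ℝ) := by
          refine (Nat.le_ceil _).trans ?_
          exact_mod_cast hn
        rw [div_le_iff₀ hc1p] at hn'
        have hPn : P n = c1*(n:ℝ) + c0 := by rw [hPpoly, ← hc2z]; ring
        rw [hPn]
        have hG2 := hGsq n hnn
        have key : c1/2 * ((n:ℝ)+1) ≤ c1*(n:ℝ) + c0 := by nlinarith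
        calc c1/(2*(α1+α0)^2) * (G n)^2
            ≤ c1/(2*(α1+α0)^2) * ((α1+α0)^2*((n:ℝ)+1)^2) := by
              exact mul_le_mul_of_nonneg_left hG2 (by positivity)
          _ = (c1/2*((n:ℝ)+1)) * ((n:ℝ)+1) := by field_simp
          _ ≤ (c1*(n:ℝ) + c0) * ((n:ℝ)+1) := by
              exact mul_le_mul_of_nonneg_right key (by linarith)
          _ = ((n:ℝ)+1) * (c1*(n:ℝ) + c0) := by ring
      · -- c1 = 0
        rcases eq_or_lt_of_le hα1 with hα1z | hα1p
        · -- α1 = 0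
          refine ⟨0, c0/α0^2, by positivity, ?_⟩
          intro n hn
          have hnn' : (0:ℝ) ≤ (n:ℝ) := by exact_mod_cast hn
          have hPn : P n = c0 := by rw [hPpoly, ← hc2z, ← hc1z]; ring
          have hGn : G n = α0 := by rw [hGdef, ← hα1z]; ring
          rw [hPn, hGn]
          have he : c0/α0^2 * α0^2 = c0 := by field_simp
          rw [he]
          nlinarith
        · -- α1 > 0 : impossible
          exfalso
          have hc2' : β1^2 + 4*α1*γ1 = 0 := by
            have := hc2z; rw [hc2def] at this; linarith
          have hc1' : 2*β1*β0 + 4*α1*γ0 + 4*α0*γ1 = 0 := by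
            have := hc1z; rw [hc1def] at this; linarith
          have hlt : β0^2 + 4*α0*γ0 < 0 := by
            have := hc0; rw [hc0def] at this; linarith
          have key : α1^2*(β0^2+4*α0*γ0) = (α1*β0-α0*β1)^2 := by
            linear_combination α0*α1*hc1' - α0^2*hc2'
          have hneg : α1^2*(β0^2+4*α0*γ0) < 0 :=
            mul_neg_of_pos_of_neg (by positivity) hlt
          nlinarith [sq_nonneg (α1*β0-α0*β1)]
  obtain ⟨N, c, hc, hclaim⟩ := claim
  obtain ⟨T, hTdef⟩ : ∃ T : ℝ, T = t (m+1) := ⟨_, rfl⟩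
  have hT : 0 < T := by rw [hTdef]; exact htpos (m+1) le_rfl
  have htboundT : ∀ n : ℤ, m + 1 ≤ n → t n ≤ T := by
    intro n hn; rw [hTdef]; exact htbound n hn
  obtain ⟨K, hKdef⟩ : ∃ K : ℕ, K = max N (m+2).toNat := ⟨_, rfl⟩
  have hKm : m + 2 ≤ (K:ℤ) := by
    have h1 : ((m+2).toNat : ℤ) = m + 2 := Int.toNat_of_nonneg (by linarith)
    calc m+2 = ((m+2).toNat : ℤ) := h1.symm
      _ ≤ (K:ℤ) := by rw [hKdef]; exact_mod_cast le_max_right N (m+2).toNat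
  have hKN : (N:ℤ) ≤ (K:ℤ) := by rw [hKdef]; exact_mod_cast le_max_left N (m+2).toNat
  obtain ⟨f, hfdef⟩ : ∃ f : ℕ → ℝ, ∀ j : ℕ, f j = c/(4*T*((K:ℝ)+(j:ℝ)+1)) :=
    ⟨_, fun _ => rfl⟩
  have hfpos : ∀ j : ℕ, 0 < f j := by
    intro j; rw [hfdef]; positivity
  have hfstep : ∀ j : ℕ, f j ≤ t ((K:ℤ)+(j:ℤ)-1) - t ((K:ℤ)+(j:ℤ)) := by
    intro j
    have hj0 : (0:ℤ) ≤ (j:ℤ) := Int.ofNat_nonneg j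
    have hnm : m + 2 ≤ (K:ℤ)+(j:ℤ) := by linarith
    have hnN : (N:ℤ) ≤ (K:ℤ)+(j:ℤ) := by linarith
    have hn0 : (0:ℤ) ≤ (K:ℤ)+(j:ℤ) := by linarith
    have hGp := hGpos _ hn0
    have hPp := hPpos _ hn0
    have htle : t ((K:ℤ)+(j:ℤ)-1) ≤ T := htboundT _ (by linarith)
    have htp : 0 < t ((K:ℤ)+(j:ℤ)-1) := htpos _ (by linarith)
    have h1 : f j ≤ P ((K:ℤ)+(j:ℤ)) / (4*(G ((K:ℤ)+(j:ℤ)))^2 * T) := by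
      rw [hfdef]
      have hcl := hclaim _ hnN
      have hcast : (((K:ℤ)+(j:ℤ) : ℤ):ℝ) = (K:ℝ)+(j:ℝ) := by push_cast; ring
      rw [hcast] at hcl
      rw [div_le_div_iff₀ (by positivity) (by positivity)]
      nlinarith [mul_le_mul_of_nonneg_left hcl (by positivity : (0:ℝ) ≤ 4*T)]
    have h2 : P ((K:ℤ)+(j:ℤ)) / (4*(G ((K:ℤ)+(j:ℤ)))^2 * T)
        ≤ P ((K:ℤ)+(j:ℤ)) / (4*(G ((K:ℤ)+(j:ℤ)))^2 * t ((K:ℤ)+(j:ℤ)-1)) := by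
      gcongr
    exact le_trans h1 (le_trans h2 (hdrop _ hnm))
  have tele : ∀ M : ℕ, ∑ j ∈ Finset.range M, f j ≤ t ((K:ℤ)-1) - t ((K:ℤ)+(M:ℤ)-1) := by
    intro M
    induction M with
    | zero => simp
    | succ M ih =>
      rw [Finset.sum_range_succ]
      have hs := hfstep M
      have e : (K:ℤ)+((M+1:ℕ):ℤ)-1 = (K:ℤ)+(M:ℤ) := by push_cast; ring
      rw [e]
      linarith
  have hbdd : ∀ M : ℕ, ∑ j ∈ Finset.range M, f j ≤ T := by
    intro M
    have h1 := tele M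
    have hM0 : (0:ℤ) ≤ (M:ℤ) := Int.ofNat_nonneg M
    have h2 : 0 < t ((K:ℤ)+(M:ℤ)-1) := htpos _ (by linarith)
    have h3 : t ((K:ℤ)-1) ≤ T := htboundT _ (by linarith)
    linarith
  have hsum : Summable f := summable_of_sum_range_le (fun j => (hfpos j).le) hbdd
  have hsum2 : Summable (fun j : ℕ => 1/((j:ℝ)+(K:ℝ)+1)) := by
    have h := hsum.mul_left (4*T/c)
    refine h.congr fun j => ?_
    rw [hfdef]
    have hne : (K:ℝ)+(j:ℝ)+1 ≠ 0 := by positivity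
    field_simp
    ring
  have hsum3 : Summable (fun n : ℕ => 1/(n:ℝ)) := by
    rw [← summable_nat_add_iff (K+1)]
    refine hsum2.congr fun j => ?_
    push_cast
    ring
  exact Real.not_summable_one_div_natCast hsum3
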